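/- Let f : 2^{[n]} → ℝ_{≥0} be a monotone submodular function with multilinear extension F, let x ∈ [0,1]^n be feasible for the strengthened LP of a k-column-sparse packing instance, let α > 0 with αk ≥ 2, and let S include each item i independently with probability x_i/(αk). Let S' = Alt'(S), where Alt'(T) = { i ∈ T : for every j ∈ N(i), Σ_{i' ∈ T : s_{i'j} ≥ s_{ij}} s_{i'j} ≤ 1 }. Then S' is always feasible for the instance and E[f(S')] ≥ (1/(αk)) · ( 1 − (1/(αk))(1 + (2/(αk))^{1/3}) )^k · F(x). -/

import Mathlib

open Finset
open scoped Classical BigOperators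

/-- Probability of the subset `T` under the product distribution on subsets of
`Fin n` with marginal probabilities `q`. -/
noncomputable def prodP {n : ℕ} (q : Fin n → ℝ) (T : Finset (Fin n)) : ℝ :=
  (∏ i ∈ T, q i) * ∏ i ∈ Tᶜ, (1 - q i)

/-- Expectation of `g(S)` where `S` is drawn from the product distribution with
marginals `q`.  In particular `exV x f` is the multilinear extension `F(x)`. -/
noncomputable def exV {n : ℕ} (q : Fin n → ℝ) (g : Finset (Fin n) → ℝ) : ℝ :=
  ∑ T : Finset (Fin n), prodP q T * g T

/-- The alteration map of the improved algorithm: keep `i ∈ T` iff for every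
constraint `j` in which `i` participates, the total size of the items of `T`
that are at least as large as `i` in constraint `j` is at most `1`. -/
noncomputable def altSet' {n m : ℕ} (s : Fin n → Fin m → ℝ) (T : Finset (Fin n)) :
    Finset (Fin n) :=
  T.filter (fun i => ∀ j, 0 < s i j →
    (∑ i' ∈ T.filter (fun i'' => s i j ≤ s i'' j), s i' j) ≤ 1)


section EVbasics
variable {ι : Type*} [DecidableEq ι]

noncomputable def pOn (q : ι → ℝ) (E T : Finset ι) : ℝ :=
  (∏ i ∈ T, q i) * ∏ i ∈ E \ T, (1 - q i)

noncomputable def EV (q : ι → ℝ) (E : Finset ι) (g : Finset ι → ℝ) : ℝ :=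
  ∑ T ∈ E.powerset, pOn q E T * g T

lemma EV_empty (q : ι → ℝ) (g : Finset ι → ℝ) : EV q ∅ g = g ∅ := by
  simp [EV, pOn]

lemma EV_insert (q : ι → ℝ) {a : ι} {E : Finset ι} (ha : a ∉ E) (g : Finset ι → ℝ) :
    EV q (insert a E) g
      = q a * EV q E (fun T => g (insert a T)) + (1 - q a) * EV q E g := by
  classical
  rw [EV, Finset.powerset_insert, Finset.sum_union]
  · have h1 : ∑ T ∈ E.powerset.image (insert a), pOn q (insert a E) T * g T
        = ∑ T ∈ E.powerset, pOn q (insert a E) (insert a T) * g (insert a T) := by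
      refine Finset.sum_image ?_
      intro T1 h1 T2 h2 he
      have ha1 : a ∉ T1 := fun h => ha ((Finset.mem_powerset.1 h1) h)
      have ha2 : a ∉ T2 := fun h => ha ((Finset.mem_powerset.1 h2) h)
      have := congrArg (Finset.erase · a) he
      simpa [Finset.erase_insert ha1, Finset.erase_insert ha2] using this
    rw [h1]
    have h2 : ∀ T ∈ E.powerset, pOn q (insert a E) (insert a T) * g (insert a T)
        = q a * (pOn q E T * g (insert a T)) := by
      intro T hT
      have haT : a ∉ T := fun h => ha ((Finset.mem_powerset.1 hT) h)
      have hset : insert a E \ insert a T = E \ T := by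
        ext x
        simp only [Finset.mem_sdiff, Finset.mem_insert]
        constructor
        · rintro ⟨hx1 | hx1, hx2⟩
          · exact absurd (Or.inl hx1) hx2
          · exact ⟨hx1, fun hxT => hx2 (Or.inr hxT)⟩
        · rintro ⟨hx1, hx2⟩
          exact ⟨Or.inr hx1, fun h => h.elim (fun h => ha (h ▸ hx1)) hx2⟩
      rw [pOn, Finset.prod_insert haT, hset, pOn]; ring
    have h3 : ∀ T ∈ E.powerset, pOn q (insert a E) T * g T
        = (1 - q a) * (pOn q E T * g T) := by
      intro T hT
      have hTE := Finset.mem_powerset.1 hT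
      have haT : a ∉ T := fun h => ha (hTE h)
      have hset : insert a E \ T = insert a (E \ T) := by
        rw [Finset.insert_sdiff_of_notMem _ haT]
      have haET : a ∉ E \ T := fun h => ha (Finset.mem_sdiff.1 h).1
      rw [pOn, hset, Finset.prod_insert haET, pOn]; ring
    rw [Finset.sum_congr rfl h2, Finset.sum_congr rfl h3, ← Finset.mul_sum,
      ← Finset.mul_sum, EV, EV]
    ring
  · rw [Finset.disjoint_left]
    intro T hT hT'
    obtain ⟨T', hT', rfl⟩ := Finset.mem_image.1 hT'
    exact ha ((Finset.mem_powerset.1 hT) (Finset.mem_insert_self a T'))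

lemma EV_congr (q : ι → ℝ) (E : Finset ι) {g h : Finset ι → ℝ}
    (hgh : ∀ T ⊆ E, g T = h T) : EV q E g = EV q E h := by
  refine Finset.sum_congr rfl fun T hT => ?_
  rw [hgh T (Finset.mem_powerset.1 hT)]

lemma pOn_nonneg {q : ι → ℝ} (hq : ∀ i, 0 ≤ q i ∧ q i ≤ 1) (E T : Finset ι) :
    0 ≤ pOn q E T := by
  refine mul_nonneg (Finset.prod_nonneg fun i _ => (hq i).1)
    (Finset.prod_nonneg fun i _ => by linarith [(hq i).2])

lemma EV_mono {q : ι → ℝ} (hq : ∀ i, 0 ≤ q i ∧ q i ≤ 1) (E : Finset ι)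
    {g h : Finset ι → ℝ} (hgh : ∀ T ⊆ E, g T ≤ h T) : EV q E g ≤ EV q E h := by
  refine Finset.sum_le_sum fun T hT => ?_
  exact mul_le_mul_of_nonneg_left (hgh T (Finset.mem_powerset.1 hT)) (pOn_nonneg hq E T)

lemma EV_const (q : ι → ℝ) (E : Finset ι) (c : ℝ) :
    EV q E (fun _ => c) = c := by
  induction E using Finset.induction with
  | empty => simp [EV_empty]
  | insert _ _ ha ih => rw [EV_insert q ha]; rw [ih]; ring

lemma EV_add (q : ι → ℝ) (E : Finset ι) (g h : Finset ι → ℝ) :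
    EV q E (fun T => g T + h T) = EV q E g + EV q E h := by
  simp only [EV, mul_add, Finset.sum_add_distrib]

lemma EV_smul (q : ι → ℝ) (E : Finset ι) (c : ℝ) (g : Finset ι → ℝ) :
    EV q E (fun T => c * g T) = c * EV q E g := by
  simp only [EV, Finset.mul_sum]; refine Finset.sum_congr rfl fun T _ => by ring

lemma EV_sum (q : ι → ℝ) (E : Finset ι) {β : Type*} (B : Finset β)
    (g : β → Finset ι → ℝ) :
    EV q E (fun T => ∑ b ∈ B, g b T) = ∑ b ∈ B, EV q E (g b) := by
  simp only [EV, Finset.mul_sum]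
  rw [Finset.sum_comm]

end EVbasics

section EVformulas
variable {ι : Type*} [DecidableEq ι]

/-- Expected value of a linear function. -/
lemma EV_linear (q : ι → ℝ) (E : Finset ι) (w : ι → ℝ) :
    EV q E (fun T => ∑ i ∈ T, w i) = ∑ i ∈ E, q i * w i := by
  induction E using Finset.induction with
  | empty => simp [EV_empty]
  | @insert a E ha ih =>
    rw [EV_insert q ha]
    have h1 : EV q E (fun T => ∑ i ∈ insert a T, w i)
        = EV q E (fun T => w a + ∑ i ∈ T, w i) := by
      refine EV_congr q E fun T hT => ?_
      rw [Finset.sum_insert (fun h => ha (hT h))]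
    rw [h1, EV_add, EV_const q E, ih,
      Finset.sum_insert ha]
    ring

/-- Expected value of the indicator that `P ⊆ T`. -/
lemma EV_subset_indicator (q : ι → ℝ) (E : Finset ι) (P : Finset ι) (hP : P ⊆ E) :
    EV q E (fun T => if P ⊆ T then 1 else 0) = ∏ i ∈ P, q i := by
  induction E using Finset.induction generalizing P with
  | empty =>
    rw [Finset.subset_empty.1 hP]
    simp [EV_empty]
  | @insert a E ha ih =>
    rw [EV_insert q ha]
    by_cases haP : a ∈ P
    · have h1 : EV q E (fun T => if P ⊆ insert a T then 1 else 0)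
          = EV q E (fun T => if P.erase a ⊆ T then 1 else 0) := by
        refine EV_congr q E fun T hT => ?_
        congr 1
        simp only [eq_iff_iff]
        constructor
        · intro h x hx
          have := h (Finset.mem_of_mem_erase hx)
          rcases Finset.mem_insert.1 this with h' | h'
          · exact absurd h' (Finset.ne_of_mem_erase hx)
          · exact h'
        · intro h x hx
          by_cases hxa : x = a
          · exact Finset.mem_insert.2 (Or.inl hxa)
          · exact Finset.mem_insert.2 (Or.inr (h (Finset.mem_erase.2 ⟨hxa, hx⟩)))
      have h2 : EV q E (fun T => if P ⊆ T then 1 else 0) = 0 := by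
        have : EV q E (fun T => if P ⊆ T then (1:ℝ) else 0)
            = EV q E (fun _ => (0:ℝ)) := by
          refine EV_congr q E fun T hT => ?_
          rw [if_neg]
          intro h
          exact ha (hT (h haP))
        rw [this, EV_const q]
      have hPE : P.erase a ⊆ E := by
        intro x hx
        rcases Finset.mem_insert.1 (hP (Finset.mem_of_mem_erase hx)) with h | h
        · exact absurd h (Finset.ne_of_mem_erase hx)
        · exact h
      rw [h1, h2, ih _ hPE, ← Finset.prod_erase_mul P q haP]
      ring
    · have hPE : P ⊆ E := fun x hx => by
        rcases Finset.mem_insert.1 (hP hx) with h | h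
        · exact absurd (h ▸ hx) haP
        · exact h
      have h1 : EV q E (fun T => if P ⊆ insert a T then 1 else 0)
          = EV q E (fun T => if P ⊆ T then 1 else 0) := by
        refine EV_congr q E fun T hT => ?_
        congr 1
        simp only [eq_iff_iff]
        constructor
        · intro h x hx
          rcases Finset.mem_insert.1 (h hx) with h' | h'
          · exact absurd (h' ▸ hx) haP
          · exact h'
        · intro h x hx
          exact Finset.mem_insert.2 (Or.inr (h hx))
      rw [h1, ih _ hPE]
      ring

/-- Harris / FKG inequality for decreasing functions under a product measure. -/
lemma EV_harris {q : ι → ℝ} (hq : ∀ i, 0 ≤ q i ∧ q i ≤ 1) (E : Finset ι)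
    {g h : Finset ι → ℝ}
    (hg : ∀ A B : Finset ι, A ⊆ B → g B ≤ g A)
    (hh : ∀ A B : Finset ι, A ⊆ B → h B ≤ h A) :
    EV q E g * EV q E h ≤ EV q E (fun T => g T * h T) := by
  induction E using Finset.induction generalizing g h with
  | empty => simp [EV_empty]
  | @insert a E ha ih =>
    rw [EV_insert q ha, EV_insert q ha, EV_insert q ha]
    have hg' : ∀ A B : Finset ι, A ⊆ B → g (insert a B) ≤ g (insert a A) :=
      fun A B hAB => hg _ _ (Finset.insert_subset_insert a hAB)
    have hh' : ∀ A B : Finset ι, A ⊆ B → h (insert a B) ≤ h (insert a A) :=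
      fun A B hAB => hh _ _ (Finset.insert_subset_insert a hAB)
    have key1 := ih hg' hh'
    have key2 := ih hg hh
    set A1 := EV q E (fun T => g (insert a T)) with hA1
    set B1 := EV q E (fun T => h (insert a T)) with hB1
    set A0 := EV q E g with hA0
    set B0 := EV q E h with hB0
    have hAle : A1 ≤ A0 :=
      EV_mono hq E fun T _ => hg T (insert a T) (Finset.subset_insert a T)
    have hBle : B1 ≤ B0 :=
      EV_mono hq E fun T _ => hh T (insert a T) (Finset.subset_insert a T)
    have e1 : EV q E (fun T => g (insert a T) * h (insert a T)) ≥ A1 * B1 := key1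
    have e2 : EV q E (fun T => g T * h T) ≥ A0 * B0 := key2
    have hqa0 := (hq a).1
    have hqa1 := (hq a).2
    have quad : (q a * A1 + (1 - q a) * A0) * (q a * B1 + (1 - q a) * B0)
        ≤ q a * (A1 * B1) + (1 - q a) * (A0 * B0) := by
      have expand : q a * (A1 * B1) + (1 - q a) * (A0 * B0)
          - (q a * A1 + (1 - q a) * A0) * (q a * B1 + (1 - q a) * B0)
          = q a * (1 - q a) * ((A0 - A1) * (B0 - B1)) := by ring
      nlinarith [mul_nonneg (mul_nonneg hqa0 (by linarith : (0:ℝ) ≤ 1 - q a))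
        (mul_nonneg (by linarith : (0:ℝ) ≤ A0 - A1) (by linarith : (0:ℝ) ≤ B0 - B1))]
    calc (q a * A1 + (1 - q a) * A0) * (q a * B1 + (1 - q a) * B0)
        ≤ q a * (A1 * B1) + (1 - q a) * (A0 * B0) := quad
      _ ≤ q a * EV q E (fun T => g (insert a T) * h (insert a T))
            + (1 - q a) * EV q E (fun T => g T * h T) := by
          have := mul_le_mul_of_nonneg_left e1 hqa0
          have := mul_le_mul_of_nonneg_left e2 (by linarith : (0:ℝ) ≤ 1 - q a)
          nlinarith [mul_le_mul_of_nonneg_left e1 hqa0,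
            mul_le_mul_of_nonneg_left e2 (by linarith : (0:ℝ) ≤ 1 - q a)]

end EVformulas

section EVmore
variable {ι : Type*} [DecidableEq ι]

lemma EV_nonneg {q : ι → ℝ} (hq : ∀ i, 0 ≤ q i ∧ q i ≤ 1) (E : Finset ι)
    {g : Finset ι → ℝ} (hg : ∀ T ⊆ E, 0 ≤ g T) : 0 ≤ EV q E g := by
  have : EV q E (fun _ => (0:ℝ)) ≤ EV q E g := EV_mono hq E hg
  rwa [EV_const] at this

/-- Iterated Harris: expectation of a product of nonnegative decreasing
functions dominates the product of expectations. -/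
lemma EV_harris_prod {q : ι → ℝ} (hq : ∀ i, 0 ≤ q i ∧ q i ≤ 1) (E : Finset ι)
    {β : Type*} (J : Finset β) (g : β → Finset ι → ℝ)
    (hgdec : ∀ b ∈ J, ∀ A B : Finset ι, A ⊆ B → g b B ≤ g b A)
    (hgnn : ∀ b ∈ J, ∀ T, 0 ≤ g b T) :
    ∏ b ∈ J, EV q E (g b) ≤ EV q E (fun T => ∏ b ∈ J, g b T) := by
  classical
  induction J using Finset.induction with
  | empty => simp [EV_const]
  | @insert b J hb ih =>
    have hprod_dec : ∀ A B : Finset ι, A ⊆ B →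
        (∏ c ∈ J, g c B) ≤ ∏ c ∈ J, g c A := by
      intro A B hAB
      refine Finset.prod_le_prod (fun c hc => hgnn c (Finset.mem_insert_of_mem hc) B)
        (fun c hc => hgdec c (Finset.mem_insert_of_mem hc) A B hAB)
    have hprod_nn : ∀ T, 0 ≤ ∏ c ∈ J, g c T :=
      fun T => Finset.prod_nonneg fun c hc => hgnn c (Finset.mem_insert_of_mem hc) T
    have harris := EV_harris hq E (hgdec b (Finset.mem_insert_self b J)) hprod_dec
    have ih' := ih (fun c hc => hgdec c (Finset.mem_insert_of_mem hc))
      (fun c hc => hgnn c (Finset.mem_insert_of_mem hc))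
    have hEVb : 0 ≤ EV q E (g b) :=
      EV_nonneg hq E fun T _ => hgnn b (Finset.mem_insert_self b J) T
    calc ∏ c ∈ insert b J, EV q E (g c)
        = EV q E (g b) * ∏ c ∈ J, EV q E (g c) := Finset.prod_insert hb
      _ ≤ EV q E (g b) * EV q E (fun T => ∏ c ∈ J, g c T) :=
          mul_le_mul_of_nonneg_left ih' hEVb
      _ ≤ EV q E (fun T => g b T * ∏ c ∈ J, g c T) := harris
      _ = EV q E (fun T => ∏ c ∈ insert b J, g c T) := by
          refine EV_congr q E fun T _ => ?_
          rw [Finset.prod_insert hb]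

/-- Feige–Mirrokni–Vondrák style thinning lemma for submodular `f`. -/
lemma EV_thin (E : Finset ι) (f : Finset ι → ℝ)
    (hsub : ∀ A B : Finset ι, f (A ∪ B) + f (A ∩ B) ≤ f A + f B)
    (x : ι → ℝ) (hx : ∀ i, 0 ≤ x i ∧ x i ≤ 1) (t : ℝ) (ht0 : 0 ≤ t) (ht1 : t ≤ 1) :
    t * EV x E f + (1 - t) * f ∅ ≤ EV (fun i => t * x i) E f := by
  classical
  induction E using Finset.induction generalizing f with
  | empty => rw [EV_empty, EV_empty]; nlinarith
  | @insert a E ha ih =>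
    have hsub' : ∀ A B : Finset ι,
        f (insert a (A ∪ B)) + f (insert a (A ∩ B)) ≤ f (insert a A) + f (insert a B) := by
      intro A B
      have h1 : insert a (A ∪ B) = insert a A ∪ insert a B := by
        simp [Finset.insert_union, Finset.union_insert]
      have h2 : insert a (A ∩ B) = insert a A ∩ insert a B := by
        rw [Finset.insert_inter_distrib]
      rw [h1, h2]; exact hsub _ _
    have ih1 := ih (fun T => f (insert a T)) hsub'
    have ih2 := ih f hsub
    rw [EV_insert _ ha, EV_insert _ ha]
    have hx0 := (hx a).1
    have hx1 := (hx a).2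
    have hc0 : 0 ≤ t * x a := mul_nonneg ht0 hx0
    have hc1 : t * x a ≤ 1 := by nlinarith
    have e1 : t * x a * (t * EV x E (fun T => f (insert a T)) + (1 - t) * f {a})
        ≤ t * x a * EV (fun i => t * x i) E (fun T => f (insert a T)) := by
      refine mul_le_mul_of_nonneg_left ?_ hc0
      simpa using ih1
    have e2 : (1 - t * x a) * (t * EV x E f + (1 - t) * f ∅)
        ≤ (1 - t * x a) * EV (fun i => t * x i) E f :=
      mul_le_mul_of_nonneg_left ih2 (by linarith)
    have key : EV x E (fun T => f (insert a T)) ≤ EV x E f + f {a} - f ∅ := by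
      have hpt : ∀ T ⊆ E, f (insert a T) ≤ f T + f {a} - f ∅ := by
        intro T hT
        have haT : a ∉ T := fun h => ha (hT h)
        have h1 : T ∪ {a} = insert a T := by
          rw [Finset.union_comm]; rfl
        have h2 : T ∩ {a} = ∅ := by
          rw [Finset.inter_comm, Finset.singleton_inter_of_notMem haT]
        have := hsub T {a}
        rw [h1, h2] at this
        linarith
      have := EV_mono (fun i => hx i) E hpt
      calc EV x E (fun T => f (insert a T))
          ≤ EV x E (fun T => f T + (f {a} - f ∅)) := by
            refine EV_mono (fun i => hx i) E fun T hT => by linarith [hpt T hT]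
        _ = EV x E f + f {a} - f ∅ := by
            rw [EV_add, EV_const]; ring
      -- adjust
    calc t * (x a * EV x E (fun T => f (insert a T)) + (1 - x a) * EV x E f)
          + (1 - t) * f ∅
        ≤ t * x a * (t * EV x E (fun T => f (insert a T)) + (1 - t) * f {a})
          + (1 - t * x a) * (t * EV x E f + (1 - t) * f ∅) := by
            nlinarith [mul_nonneg (mul_nonneg hc0 (by linarith : (0:ℝ) ≤ 1 - t))
              (by linarith [key] : (0:ℝ) ≤ EV x E f + f {a} - f ∅
                - EV x E (fun T => f (insert a T)))]
      _ ≤ t * x a * EV (fun i => t * x i) E (fun T => f (insert a T))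
          + (1 - t * x a) * EV (fun i => t * x i) E f := by linarith

end EVmore

section Marg
variable {n : ℕ}

noncomputable def lowf (i : Fin n) (T : Finset (Fin n)) : Finset (Fin n) :=
  T.filter (fun x => x < i)

noncomputable def lowef (i : Fin n) (T : Finset (Fin n)) : Finset (Fin n) :=
  T.filter (fun x => x ≤ i)

noncomputable def margf (f : Finset (Fin n) → ℝ) (i : Fin n) (T : Finset (Fin n)) : ℝ :=
  f (insert i (lowf i T)) - f (lowf i T)

lemma marg_anti {f : Finset (Fin n) → ℝ}
    (hsub : ∀ A B : Finset (Fin n), f (A ∪ B) + f (A ∩ B) ≤ f A + f B)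
    {a : Fin n} {A B : Finset (Fin n)} (hAB : A ⊆ B) (haB : a ∉ B) :
    f (insert a B) - f B ≤ f (insert a A) - f A := by
  have h := hsub (insert a A) B
  have h1 : insert a A ∪ B = insert a B := by
    ext x
    simp only [Finset.mem_union, Finset.mem_insert]
    constructor
    · rintro (⟨h | h⟩ | h)
      · exact Or.inl h
      · exact Or.inr (hAB h)
      · exact Or.inr h
    · rintro (h | h)
      · exact Or.inl (Or.inl h)
      · exact Or.inr h
  have h2 : insert a A ∩ B = A := by
    ext x
    simp only [Finset.mem_inter, Finset.mem_insert]
    constructor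
    · rintro ⟨h | h, hB⟩
      · exact absurd (h ▸ hB) haB
      · exact h
    · intro h
      exact ⟨Or.inr h, hAB h⟩
  rw [h1, h2] at h
  linarith

lemma telescope (f : Finset (Fin n) → ℝ) (T : Finset (Fin n)) :
    f T = f ∅ + ∑ i ∈ T, (f (lowef i T) - f (lowf i T)) := by
  induction T using Finset.induction_on_max with
  | empty => simp
  | insert a s hs ih =>
    have has : a ∉ s := fun h => absurd rfl (ne_of_lt (hs a h))
    rw [Finset.sum_insert has]
    have h1 : lowef a (insert a s) = insert a s := by
      ext x
      simp only [lowef, Finset.mem_filter, Finset.mem_insert]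
      refine ⟨fun h => h.1, fun h => ⟨h, ?_⟩⟩
      rcases h with h | h
      · exact le_of_eq h
      · exact le_of_lt (hs x h)
    have h2 : lowf a (insert a s) = s := by
      ext x
      simp only [lowf, Finset.mem_filter, Finset.mem_insert]
      constructor
      · rintro ⟨h | h, hlt⟩
        · exact absurd (h ▸ hlt) (lt_irrefl a)
        · exact h
      · intro h
        exact ⟨Or.inr h, hs x h⟩
    have h3 : ∀ i ∈ s, f (lowef i (insert a s)) - f (lowf i (insert a s))
        = f (lowef i s) - f (lowf i s) := by
      intro i hi
      have hai : ¬ a ≤ i := not_le.2 (hs i hi)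
      have h4 : lowef i (insert a s) = lowef i s := by
        ext x
        simp only [lowef, Finset.mem_filter, Finset.mem_insert]
        constructor
        · rintro ⟨h | h, hle⟩
          · exact absurd (h ▸ hle) hai
          · exact ⟨h, hle⟩
        · rintro ⟨h, hle⟩; exact ⟨Or.inr h, hle⟩
      have h5 : lowf i (insert a s) = lowf i s := by
        ext x
        simp only [lowf, Finset.mem_filter, Finset.mem_insert]
        constructor
        · rintro ⟨h | h, hlt⟩
          · exact absurd (h ▸ hlt) (fun hh => hai (le_of_lt hh))
          · exact ⟨h, hlt⟩
        · rintro ⟨h, hlt⟩; exact ⟨Or.inr h, hlt⟩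
      rw [h4, h5]
    rw [Finset.sum_congr rfl h3, h1, h2]
    linarith [ih]

/-- For `S' ⊆ T`, submodularity gives the chain lower bound. -/
lemma chain_bound {f : Finset (Fin n) → ℝ}
    (hsub : ∀ A B : Finset (Fin n), f (A ∪ B) + f (A ∩ B) ≤ f A + f B)
    {S' T : Finset (Fin n)} (hST : S' ⊆ T) :
    f ∅ + ∑ i ∈ S', margf f i T ≤ f S' := by
  rw [telescope f S']
  have key : ∀ i ∈ S', margf f i T ≤ f (lowef i S') - f (lowf i S') := by
    intro i hi
    have h1 : lowef i S' = insert i (lowf i S') := by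
      ext x
      simp only [lowef, lowf, Finset.mem_filter, Finset.mem_insert]
      constructor
      · rintro ⟨hx, hle⟩
        rcases lt_or_eq_of_le hle with h | h
        · exact Or.inr ⟨hx, h⟩
        · exact Or.inl h
      · rintro (h | ⟨hx, hlt⟩)
        · exact ⟨h ▸ hi, le_of_eq h⟩
        · exact ⟨hx, le_of_lt hlt⟩
    have hsubs : lowf i S' ⊆ lowf i T := fun x hx => by
      simp only [lowf, Finset.mem_filter] at hx ⊢
      exact ⟨hST hx.1, hx.2⟩
    have hiT : i ∉ lowf i T := by
      simp only [lowf, Finset.mem_filter]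
      exact fun h => absurd h.2 (lt_irrefl i)
    have := marg_anti hsub hsubs hiT
    rw [h1, margf]
    linarith
  have := Finset.sum_le_sum key
  linarith

end Marg

section Cond
variable {ι : Type*} [DecidableEq ι]

lemma EV_condition (q : ι → ℝ) {E : Finset ι} {i : ι} (hi : i ∈ E) (g : Finset ι → ℝ) :
    EV q E g = q i * EV q (E.erase i) (fun T => g (insert i T))
      + (1 - q i) * EV q (E.erase i) g := by
  conv_lhs => rw [← Finset.insert_erase hi]
  exact EV_insert q (Finset.notMem_erase i E) g

lemma EV_erase_of_indep (q : ι → ℝ) {E : Finset ι} {i : ι} (hi : i ∈ E)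
    {g : Finset ι → ℝ} (hg : ∀ T ⊆ E.erase i, g (insert i T) = g T) :
    EV q E g = EV q (E.erase i) g := by
  rw [EV_condition q hi g, EV_congr q (E.erase i) hg]
  ring

end Cond

section Decomp
variable {n : ℕ}

lemma lowf_insert_self (i : Fin n) (T : Finset (Fin n)) :
    lowf i (insert i T) = lowf i T := by
  ext x
  simp only [lowf, Finset.mem_filter, Finset.mem_insert]
  constructor
  · rintro ⟨h | h, hlt⟩
    · exact absurd (h ▸ hlt) (lt_irrefl i)
    · exact ⟨h, hlt⟩
  · rintro ⟨h, hlt⟩; exact ⟨Or.inr h, hlt⟩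

lemma lowef_insert_self {i : Fin n} {T : Finset (Fin n)} (hiT : i ∉ T) :
    lowef i (insert i T) = insert i (lowf i T) := by
  ext x
  simp only [lowef, lowf, Finset.mem_filter, Finset.mem_insert]
  constructor
  · rintro ⟨h | h, hle⟩
    · exact Or.inl h
    · rcases lt_or_eq_of_le hle with h' | h'
      · exact Or.inr ⟨h, h'⟩
      · exact Or.inl h'
  · rintro (h | ⟨hx, hlt⟩)
    · exact ⟨Or.inl h, le_of_eq h⟩
    · exact ⟨Or.inr hx, le_of_lt hlt⟩

lemma margf_insert_self (f : Finset (Fin n) → ℝ) (i : Fin n) (T : Finset (Fin n)) :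
    margf f i (insert i T) = margf f i T := by
  rw [margf, margf, lowf_insert_self]

lemma margf_anti {f : Finset (Fin n) → ℝ}
    (hsub : ∀ A B : Finset (Fin n), f (A ∪ B) + f (A ∩ B) ≤ f A + f B)
    (i : Fin n) {A B : Finset (Fin n)} (hAB : A ⊆ B) :
    margf f i B ≤ margf f i A := by
  have hsubs : lowf i A ⊆ lowf i B := fun x hx => by
    simp only [lowf, Finset.mem_filter] at hx ⊢
    exact ⟨hAB hx.1, hx.2⟩
  have hiB : i ∉ lowf i B := by
    simp only [lowf, Finset.mem_filter]
    exact fun h => absurd h.2 (lt_irrefl i)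
  exact marg_anti hsub hsubs hiB

lemma margf_nonneg {f : Finset (Fin n) → ℝ}
    (hmono : ∀ A B : Finset (Fin n), A ⊆ B → f A ≤ f B) (i : Fin n)
    (T : Finset (Fin n)) : 0 ≤ margf f i T := by
  have := hmono (lowf i T) (insert i (lowf i T)) (Finset.subset_insert i _)
  rw [margf]; linarith

lemma EV_decomp (q : Fin n → ℝ) (f : Finset (Fin n) → ℝ) :
    EV q univ f = f ∅ + ∑ i : Fin n, q i * EV q (univ.erase i) (margf f i) := by
  have h0 : EV q univ f
      = EV q univ (fun T => f ∅ + ∑ i : Fin n,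
          (if i ∈ T then f (lowef i T) - f (lowf i T) else 0)) := by
    refine EV_congr q univ fun T _ => ?_
    rw [telescope f T]
    congr 1
    rw [Finset.sum_ite_mem, Finset.univ_inter]
  rw [h0, EV_add, EV_const, EV_sum]
  congr 1
  refine Finset.sum_congr rfl fun i _ => ?_
  rw [EV_condition q (Finset.mem_univ i)]
  have h1 : EV q (univ.erase i)
      (fun T => if i ∈ insert i T then f (lowef i (insert i T)) - f (lowf i (insert i T)) else 0)
      = EV q (univ.erase i) (margf f i) := by
    refine EV_congr q _ fun T hT => ?_
    have hiT : i ∉ T := fun h => Finset.notMem_erase i univ (hT h)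
    rw [if_pos (Finset.mem_insert_self i T), lowef_insert_self hiT, lowf_insert_self, margf]
  have h2 : EV q (univ.erase i)
      (fun T => if i ∈ T then f (lowef i T) - f (lowf i T) else 0) = 0 := by
    have : EV q (univ.erase i)
        (fun T => if i ∈ T then f (lowef i T) - f (lowf i T) else 0)
        = EV q (univ.erase i) (fun _ => (0:ℝ)) := by
      refine EV_congr q _ fun T hT => ?_
      rw [if_neg (fun h => Finset.notMem_erase i univ (hT h))]
    rw [this, EV_const]
  rw [h1, h2]
  ring

end Decomp

section Problem
variable {n m : ℕ}

/-- good indicator for item `i`, constraint `j`, on sets not containing `i`. -/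
noncomputable def goodInd (s : Fin n → Fin m → ℝ) (i : Fin n) (j : Fin m)
    (T : Finset (Fin n)) : ℝ :=
  if s i j + ∑ i' ∈ T.filter (fun i' => s i j ≤ s i' j), s i' j ≤ 1 then 1 else 0

lemma goodInd_nonneg (s : Fin n → Fin m → ℝ) (i : Fin n) (j : Fin m)
    (T : Finset (Fin n)) : 0 ≤ goodInd s i j T := by
  rw [goodInd]; split <;> norm_num

lemma goodInd_le_one (s : Fin n → Fin m → ℝ) (i : Fin n) (j : Fin m)
    (T : Finset (Fin n)) : goodInd s i j T ≤ 1 := by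
  rw [goodInd]; split <;> norm_num

lemma goodInd_anti (s : Fin n → Fin m → ℝ) (hs : ∀ i j, s i j ∈ Set.Icc (0:ℝ) 1)
    (i : Fin n) (j : Fin m) {A B : Finset (Fin n)} (hAB : A ⊆ B) :
    goodInd s i j B ≤ goodInd s i j A := by
  rw [goodInd, goodInd]
  have hsub : A.filter (fun i' => s i j ≤ s i' j) ⊆ B.filter (fun i' => s i j ≤ s i' j) :=
    Finset.filter_subset_filter _ hAB
  have h2 := Finset.sum_le_sum_of_subset_of_nonneg hsub (fun x _ _ => (hs x j).1)
  split_ifs with hB hA hA'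
  · norm_num
  · exfalso; exact hA (by linarith)
  · norm_num
  · norm_num

/-- The keep-indicator factors as a product of per-constraint indicators. -/
lemma keep_eq_prod (s : Fin n → Fin m → ℝ) (i : Fin n) {T : Finset (Fin n)}
    (hiT : i ∉ T) :
    (if i ∈ altSet' s (insert i T) then (1:ℝ) else 0)
      = ∏ j ∈ univ.filter (fun j => 0 < s i j), goodInd s i j T := by
  have hfilter : ∀ j : Fin m,
      (insert i T).filter (fun i'' => s i j ≤ s i'' j)
        = insert i (T.filter (fun i'' => s i j ≤ s i'' j)) := by
    intro j
    rw [Finset.filter_insert, if_pos (le_refl (s i j))]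
  have hsum : ∀ j : Fin m,
      ∑ i' ∈ (insert i T).filter (fun i'' => s i j ≤ s i'' j), s i' j
        = s i j + ∑ i' ∈ T.filter (fun i'' => s i j ≤ s i'' j), s i' j := by
    intro j
    rw [hfilter j, Finset.sum_insert (fun h => hiT (Finset.mem_filter.1 h).1)]
  by_cases hmem : i ∈ altSet' s (insert i T)
  · rw [if_pos hmem]
    have hcond := (Finset.mem_filter.1 hmem).2
    symm
    refine Finset.prod_eq_one fun j hj => ?_
    have hj' := (Finset.mem_filter.1 hj).2
    have := hcond j hj'
    rw [hsum j] at this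
    rw [goodInd, if_pos this]
  · rw [if_neg hmem]
    have : ∃ j, 0 < s i j ∧
        ¬ (s i j + ∑ i' ∈ T.filter (fun i'' => s i j ≤ s i'' j), s i' j ≤ 1) := by
      by_contra hcon
      push_neg at hcon
      apply hmem
      rw [altSet', Finset.mem_filter]
      refine ⟨Finset.mem_insert_self i T, fun j hj => ?_⟩
      rw [hsum j]
      exact hcon j hj
    obtain ⟨j, hj1, hj2⟩ := this
    symm
    refine Finset.prod_eq_zero (Finset.mem_filter.2 ⟨Finset.mem_univ j, hj1⟩) ?_
    rw [goodInd, if_neg hj2]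

lemma EV_one_sub (q : Fin n → ℝ) (E : Finset (Fin n)) (g : Finset (Fin n) → ℝ) :
    EV q E (fun T => 1 - g T) = 1 - EV q E g := by
  have : EV q E (fun T => 1 - g T) = EV q E (fun T => (1:ℝ) + (-1) * g T) := by
    refine EV_congr q E fun T _ => by ring
  rw [this, EV_add, EV_const, EV_smul]
  ring

end Problem


section Constraint
variable {n m : ℕ}

set_option maxHeartbeats 1000000 in
lemma constraint_bound (s : Fin n → Fin m → ℝ)
    (hs : ∀ i j, s i j ∈ Set.Icc (0:ℝ) 1)
    (x : Fin n → ℝ) (hx : ∀ i, x i ∈ Set.Icc (0:ℝ) 1)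
    (hLP : ∀ j, ∑ i, s i j * x i ≤ 1)
    (hLPbig : ∀ j, ∑ i ∈ univ.filter (fun i => 1/2 < s i j), x i ≤ 1)
    (t ε : ℝ) (ht0 : 0 < t) (ht2 : t ≤ 1/2)
    (hε0 : 0 < ε) (hε1 : ε ≤ 1) (hε3 : ε^3 = 2*t)
    (q : Fin n → ℝ) (hq : ∀ i, q i = t * x i)
    (i : Fin n) (j : Fin m) (hij : 0 < s i j) :
    1 - t*(1+ε) ≤ EV q ((univ : Finset (Fin n)).erase i) (goodInd s i j) := by
  have hqI : ∀ i', 0 ≤ q i' ∧ q i' ≤ 1 := by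
    intro i'
    rw [hq]
    constructor
    · exact mul_nonneg ht0.le (hx i').1
    · nlinarith [(hx i').1, (hx i').2]
  set E' := (univ : Finset (Fin n)).erase i with hE'
  set c := s i j with hc
  have hc0 : 0 < c := hij
  have hc1 : c ≤ 1 := (hs i j).2
  -- expectation of the overflow sum
  have hZEV : EV q E' (fun T => ∑ i' ∈ T.filter (fun i' => s i j ≤ s i' j), s i' j) ≤ t := by
    have h1 : EV q E' (fun T => ∑ i' ∈ T.filter (fun i' => s i j ≤ s i' j), s i' j)
        = EV q E' (fun T => ∑ i' ∈ T, if s i j ≤ s i' j then s i' j else 0) := by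
      refine EV_congr q E' fun T _ => ?_
      rw [Finset.sum_filter]
    rw [h1, EV_linear]
    have h2 : ∀ i' ∈ E', q i' * (if s i j ≤ s i' j then s i' j else 0)
        ≤ t * (s i' j * x i') := by
      intro i' _
      rw [hq]
      have := (hs i' j).1
      have := (hx i').1
      split_ifs with h
      · nlinarith
      · rw [mul_zero]
        exact mul_nonneg ht0.le (mul_nonneg (hs i' j).1 (hx i').1)
    calc ∑ i' ∈ E', q i' * (if s i j ≤ s i' j then s i' j else 0)
        ≤ ∑ i' ∈ E', t * (s i' j * x i') := Finset.sum_le_sum h2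
      _ = t * ∑ i' ∈ E', s i' j * x i' := by rw [Finset.mul_sum]
      _ ≤ t * ∑ i', s i' j * x i' := by
          refine mul_le_mul_of_nonneg_left ?_ ht0.le
          refine Finset.sum_le_sum_of_subset_of_nonneg (Finset.subset_univ E') ?_
          intro i' _ _
          exact mul_nonneg (hs i' j).1 (hx i').1
      _ ≤ t * 1 := mul_le_mul_of_nonneg_left (hLP j) ht0.le
      _ = t := mul_one t
  -- expectation of number of big items
  have hBig : ∑ b ∈ E'.filter (fun b => 1/2 < s b j), q b ≤ t := by
    have h1 : ∀ b ∈ E'.filter (fun b => 1/2 < s b j), q b = t * x b := fun b _ => hq b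
    rw [Finset.sum_congr rfl h1, ← Finset.mul_sum]
    have h2 : ∑ b ∈ E'.filter (fun b => 1/2 < s b j), x b
        ≤ ∑ b ∈ univ.filter (fun b => 1/2 < s b j), x b := by
      refine Finset.sum_le_sum_of_subset_of_nonneg ?_ (fun b _ _ => (hx b).1)
      exact Finset.filter_subset_filter _ (Finset.subset_univ E')
    calc t * ∑ b ∈ E'.filter (fun b => 1/2 < s b j), x b
        ≤ t * 1 := mul_le_mul_of_nonneg_left (le_trans h2 (hLPbig j)) ht0.le
      _ = t := mul_one t
  -- reduce to bounding the bad probability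
  have hkey : EV q E' (fun T => 1 - goodInd s i j T) ≤ t * (1 + ε) → _ := id
  suffices hbad : EV q E' (fun T => 1 - goodInd s i j T) ≤ t * (1 + ε) by
    have := EV_one_sub q E' (goodInd s i j)
    linarith
  by_cases hcase1 : c ≤ ε / (1 + ε)
  · -- small item: Markov
    have h1ε : (0:ℝ) < 1 + ε := by linarith
    have hchalf : c ≤ 1/2 := by
      have : ε / (1+ε) ≤ 1/2 := by
        rw [div_le_iff₀ h1ε]; linarith
      linarith
    have h1c : (0:ℝ) < 1 - c := by linarith
    have hpt : ∀ T ⊆ E', 1 - goodInd s i j T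
        ≤ (1/(1-c)) * ∑ i' ∈ T.filter (fun i' => s i j ≤ s i' j), s i' j := by
      intro T _
      have hZnn : 0 ≤ ∑ i' ∈ T.filter (fun i' => s i j ≤ s i' j), s i' j :=
        Finset.sum_nonneg fun i' _ => (hs i' j).1
      rw [goodInd]
      split_ifs with h
      · simp only [sub_self]
        positivity
      · push_neg at h
        have hZgt : 1 - c ≤ ∑ i' ∈ T.filter (fun i' => s i j ≤ s i' j), s i' j := by
          linarith
        have := mul_le_mul_of_nonneg_left hZgt
          (by positivity : (0:ℝ) ≤ 1/(1-c))
        have heq : (1/(1-c)) * (1-c) = 1 := by field_simp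
        linarith
    have h2 := EV_mono hqI E' hpt
    have h3 : EV q E' (fun T => (1/(1-c)) *
        ∑ i' ∈ T.filter (fun i' => s i j ≤ s i' j), s i' j)
        = (1/(1-c)) * EV q E' (fun T => ∑ i' ∈ T.filter (fun i' => s i j ≤ s i' j), s i' j) :=
      EV_smul q E' _ _
    have h4 : (1/(1-c)) * EV q E' (fun T => ∑ i' ∈ T.filter (fun i' => s i j ≤ s i' j), s i' j)
        ≤ (1/(1-c)) * t := by
      refine mul_le_mul_of_nonneg_left hZEV (by positivity)
    have h5 : (1/(1-c)) * t ≤ t * (1+ε) := by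
      rw [one_div, inv_mul_eq_div, div_le_iff₀ h1c]
      have hcε : c * (1+ε) ≤ ε := by
        rw [le_div_iff₀ h1ε] at hcase1
        linarith [hcase1]
      nlinarith
    linarith
  · push_neg at hcase1
    have h1ε : (0:ℝ) < 1 + ε := by linarith
    have hcε2 : ε / 2 ≤ c := by
      have : ε / 2 ≤ ε / (1+ε) := by
        rw [div_le_div_iff₀ (by norm_num) h1ε]
        nlinarith
      linarith
    by_cases hc2 : c ≤ 1/2
    · -- medium case
      set Big := E'.filter (fun b => 1/2 < s b j) with hBigdef
      set Med := E'.filter (fun b => s i j ≤ s b j ∧ s b j ≤ 1/2) with hMeddef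
      set G := fun T : Finset (Fin n) =>
        (∑ b ∈ Big, if b ∈ T then (1:ℝ) else 0)
        + (1/2) * ∑ a ∈ Med, ∑ b ∈ Med.erase a,
            (if ({a, b} : Finset (Fin n)) ⊆ T then (1:ℝ) else 0) with hGdef
      have hGnn1 : ∀ T : Finset (Fin n), 0 ≤ ∑ b ∈ Big, if b ∈ T then (1:ℝ) else 0 := by
        intro T
        refine Finset.sum_nonneg fun b _ => by split <;> norm_num
      have hGnn2 : ∀ T : Finset (Fin n), 0 ≤ ∑ a ∈ Med, ∑ b ∈ Med.erase a,
          (if ({a, b} : Finset (Fin n)) ⊆ T then (1:ℝ) else 0) := by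
        intro T
        refine Finset.sum_nonneg fun a _ => Finset.sum_nonneg fun b _ => by split <;> norm_num
      have hpt : ∀ T ⊆ E', 1 - goodInd s i j T ≤ G T := by
        intro T hT
        rw [goodInd]
        split_ifs with h
        · have := hGnn1 T
          have := hGnn2 T
          simp only [hGdef, sub_self]
          positivity
        · push_neg at h
          by_cases hbig : ∃ b ∈ Big, b ∈ T
          · obtain ⟨b, hbB, hbT⟩ := hbig
            have h1 : (1:ℝ) ≤ ∑ b ∈ Big, if b ∈ T then (1:ℝ) else 0 := by
              have := Finset.single_le_sum
                (f := fun b => if b ∈ T then (1:ℝ) else 0)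
                (fun b _ => by split <;> norm_num) hbB
              rw [if_pos hbT] at this
              exact this
            have := hGnn2 T
            simp only [hGdef]
            nlinarith
          · push_neg at hbig
            set M := T.filter (fun i' => s i j ≤ s i' j) with hMdef
            have hMMed : M ⊆ Med := by
              intro b hb
              rw [hMdef, Finset.mem_filter] at hb
              rw [hMeddef, Finset.mem_filter]
              refine ⟨hT hb.1, hb.2, ?_⟩
              by_contra hcon
              push_neg at hcon
              exact absurd hb.1 (fun hh => by
                have : b ∈ Big := by
                  rw [hBigdef, Finset.mem_filter]
                  exact ⟨hT hb.1, hcon⟩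
                exact absurd hh (by intro _; exact (hbig b this) hh))
            have hMT : M ⊆ T := Finset.filter_subset _ T
            have hZle : ∑ i' ∈ M, s i' j ≤ (M.card : ℝ) * (1/2) := by
              have := Finset.sum_le_card_nsmul M (fun i' => s i' j) (1/2)
                (fun b hb => (hMMed hb |> fun h => by
                  rw [hMeddef, Finset.mem_filter] at h
                  exact h.2.2))
              simpa [nsmul_eq_mul] using this
            have hcard : 1 < M.card := by
              by_contra hcon
              push_neg at hcon
              have : (M.card : ℝ) ≤ 1 := by exact_mod_cast hcon
              nlinarith
            obtain ⟨a, haM, b, hbM, hab⟩ := Finset.one_lt_card.1 hcard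
            have habT : ({a, b} : Finset (Fin n)) ⊆ T := by
              intro y hy
              rcases Finset.mem_insert.1 hy with h' | h'
              · exact hMT (h' ▸ haM)
              · exact hMT ((Finset.mem_singleton.1 h') ▸ hbM)
            have hbaT : ({b, a} : Finset (Fin n)) ⊆ T := by
              intro y hy
              rcases Finset.mem_insert.1 hy with h' | h'
              · exact hMT (h' ▸ hbM)
              · exact hMT ((Finset.mem_singleton.1 h') ▸ haM)
            have hinner : ∀ a' ∈ ({a, b} : Finset (Fin n)),
                (1:ℝ) ≤ ∑ b' ∈ Med.erase a',
                  (if ({a', b'} : Finset (Fin n)) ⊆ T then (1:ℝ) else 0) := by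
              intro a' ha'
              rcases Finset.mem_insert.1 ha' with h' | h'
              · subst h'
                have hbmem : b ∈ Med.erase a' :=
                  Finset.mem_erase.2 ⟨Ne.symm hab, hMMed hbM⟩
                have := Finset.single_le_sum
                  (f := fun b' => if ({a', b'} : Finset (Fin n)) ⊆ T then (1:ℝ) else 0)
                  (fun b' _ => by split <;> norm_num) hbmem
                rw [if_pos habT] at this
                exact this
              · rw [Finset.mem_singleton.1 h']
                have hamem : a ∈ Med.erase b :=
                  Finset.mem_erase.2 ⟨hab, hMMed haM⟩
                have := Finset.single_le_sum
                  (f := fun b' => if ({b, b'} : Finset (Fin n)) ⊆ T then (1:ℝ) else 0)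
                  (fun b' _ => by split <;> norm_num) hamem
                rw [if_pos hbaT] at this
                exact this
            have hsum2 : (2:ℝ) ≤ ∑ a' ∈ Med, ∑ b' ∈ Med.erase a',
                (if ({a', b'} : Finset (Fin n)) ⊆ T then (1:ℝ) else 0) := by
              have hsubAB : ({a, b} : Finset (Fin n)) ⊆ Med := by
                intro y hy
                rcases Finset.mem_insert.1 hy with h' | h'
                · exact hMMed (h' ▸ haM)
                · exact hMMed ((Finset.mem_singleton.1 h') ▸ hbM)
              have h1 : ∑ a' ∈ ({a, b} : Finset (Fin n)), ∑ b' ∈ Med.erase a',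
                  (if ({a', b'} : Finset (Fin n)) ⊆ T then (1:ℝ) else 0)
                  ≤ ∑ a' ∈ Med, ∑ b' ∈ Med.erase a',
                  (if ({a', b'} : Finset (Fin n)) ⊆ T then (1:ℝ) else 0) := by
                refine Finset.sum_le_sum_of_subset_of_nonneg hsubAB fun a' _ _ => ?_
                exact Finset.sum_nonneg fun b' _ => by split <;> norm_num
              have h5 : ∑ a' ∈ ({a, b} : Finset (Fin n)), (1:ℝ)
                  ≤ ∑ a' ∈ ({a, b} : Finset (Fin n)), ∑ b' ∈ Med.erase a',
                  (if ({a', b'} : Finset (Fin n)) ⊆ T then (1:ℝ) else 0) :=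
                Finset.sum_le_sum hinner
              have h6 : ∑ a' ∈ ({a, b} : Finset (Fin n)), (1:ℝ) = 2 := by
                rw [Finset.sum_const, Finset.card_pair hab]
                norm_num
              linarith
            have := hGnn1 T
            simp only [hGdef]
            nlinarith
      have h2 := EV_mono hqI E' hpt
      -- compute EV of G
      have hEVsingle : ∀ b ∈ Big, EV q E' (fun T => if b ∈ T then (1:ℝ) else 0) = q b := by
        intro b hb
        have hbE : ({b} : Finset (Fin n)) ⊆ E' :=
          Finset.singleton_subset_iff.2 ((Finset.filter_subset _ E') hb)
        have h1 : EV q E' (fun T => if b ∈ T then (1:ℝ) else 0)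
            = EV q E' (fun T => if ({b} : Finset (Fin n)) ⊆ T then (1:ℝ) else 0) := by
          refine EV_congr q E' fun T _ => ?_
          congr 1
          simp [Finset.singleton_subset_iff]
        rw [h1, EV_subset_indicator q E' _ hbE, Finset.prod_singleton]
      have hEVpair : ∀ a ∈ Med, ∀ b ∈ Med.erase a,
          EV q E' (fun T => if ({a, b} : Finset (Fin n)) ⊆ T then (1:ℝ) else 0)
            = q a * q b := by
        intro a ha b hb
        have hab : a ≠ b := fun h => (Finset.mem_erase.1 hb).1 h.symm
        have habE : ({a, b} : Finset (Fin n)) ⊆ E' := by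
          intro y hy
          rcases Finset.mem_insert.1 hy with h' | h'
          · exact h' ▸ (Finset.filter_subset _ E') ha
          · exact (Finset.mem_singleton.1 h') ▸ (Finset.filter_subset _ E')
              (Finset.mem_of_mem_erase hb)
        rw [EV_subset_indicator q E' _ habE, Finset.prod_pair hab]
      have hEVG : EV q E' G = (∑ b ∈ Big, q b)
          + (1/2) * ∑ a ∈ Med, ∑ b ∈ Med.erase a, q a * q b := by
        simp only [hGdef]
        rw [EV_add, EV_smul, EV_sum, EV_sum]
        congr 1
        · exact Finset.sum_congr rfl hEVsingle
        · congr 1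
          refine Finset.sum_congr rfl fun a ha => ?_
          rw [EV_sum]
          exact Finset.sum_congr rfl fun b hb => hEVpair a ha b hb
      -- numeric bound
      set S := ∑ b ∈ Med, q b with hSdef
      have hS0 : 0 ≤ S := Finset.sum_nonneg fun b _ => (hqI b).1
      have hcS : c * S ≤ t := by
        have h3 : ∀ b ∈ Med, c * q b ≤ t * (s b j * x b) := by
          intro b hb
          rw [hMeddef, Finset.mem_filter] at hb
          rw [hq]
          have := (hx b).1
          nlinarith [hb.2.1, mul_nonneg ht0.le (hx b).1]
        calc c * S = ∑ b ∈ Med, c * q b := by rw [hSdef, Finset.mul_sum]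
          _ ≤ ∑ b ∈ Med, t * (s b j * x b) := Finset.sum_le_sum h3
          _ = t * ∑ b ∈ Med, s b j * x b := by rw [Finset.mul_sum]
          _ ≤ t * ∑ b, s b j * x b := by
              refine mul_le_mul_of_nonneg_left ?_ ht0.le
              refine Finset.sum_le_sum_of_subset_of_nonneg (Finset.subset_univ Med) ?_
              exact fun b _ _ => mul_nonneg (hs b j).1 (hx b).1
          _ ≤ t * 1 := mul_le_mul_of_nonneg_left (hLP j) ht0.le
          _ = t := mul_one t
      have hpairsum : ∑ a ∈ Med, ∑ b ∈ Med.erase a, q a * q b ≤ S * S := by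
        have h3 : ∀ a ∈ Med, ∑ b ∈ Med.erase a, q a * q b ≤ q a * S := by
          intro a _
          rw [← Finset.mul_sum]
          refine mul_le_mul_of_nonneg_left ?_ (hqI a).1
          exact Finset.sum_le_sum_of_subset_of_nonneg (Finset.erase_subset a Med)
            (fun b _ _ => (hqI b).1)
        calc ∑ a ∈ Med, ∑ b ∈ Med.erase a, q a * q b
            ≤ ∑ a ∈ Med, q a * S := Finset.sum_le_sum h3
          _ = S * S := by rw [← Finset.sum_mul, ← hSdef]
      have hSsq : S * S ≤ 2 * t * ε := by
        have h4 : c * c * (S * S) ≤ t * t := by nlinarith [mul_nonneg hc0.le hS0]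
        have hc2' : ε/2 * (ε/2) ≤ c * c :=
          mul_le_mul hcε2 hcε2 (by positivity) hc0.le
        have h5 : t ≤ 2 * ε * (c * c) := by
          have h6 := mul_le_mul_of_nonneg_left hc2' (by positivity : (0:ℝ) ≤ 2*ε)
          nlinarith
        have h6 : 0 < c * c := mul_pos hc0 hc0
        nlinarith [mul_le_mul_of_nonneg_left h5 ht0.le]
      calc EV q E' (fun T => 1 - goodInd s i j T) ≤ EV q E' G := h2
        _ = (∑ b ∈ Big, q b) + (1/2) * ∑ a ∈ Med, ∑ b ∈ Med.erase a, q a * q b := hEVG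
        _ ≤ t + (1/2) * (S * S) := by
            have := hBig
            have := hpairsum
            nlinarith
        _ ≤ t * (1 + ε) := by nlinarith
    · -- big case
      push_neg at hc2
      set Big := E'.filter (fun b => 1/2 < s b j) with hBigdef
      have hpt : ∀ T ⊆ E', 1 - goodInd s i j T
          ≤ ∑ b ∈ Big, if b ∈ T then (1:ℝ) else 0 := by
        intro T hT
        have hnn : 0 ≤ ∑ b ∈ Big, if b ∈ T then (1:ℝ) else 0 :=
          Finset.sum_nonneg fun b _ => by split <;> norm_num
        rw [goodInd]
        split_ifs with h
        · simpa using hnn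
        · push_neg at h
          have hZpos : 0 < ∑ i' ∈ T.filter (fun i' => s i j ≤ s i' j), s i' j := by
            linarith
          obtain ⟨b, hb, _⟩ := Finset.exists_ne_zero_of_sum_ne_zero (ne_of_gt hZpos)
          rw [Finset.mem_filter] at hb
          have hbBig : b ∈ Big := by
            rw [hBigdef, Finset.mem_filter]
            exact ⟨hT hb.1, by linarith [hb.2]⟩
          have := Finset.single_le_sum
            (f := fun b' => if b' ∈ T then (1:ℝ) else 0)
            (fun b' _ => by split <;> norm_num) hbBig
          rw [if_pos hb.1] at this
          linarith
      have h2 := EV_mono hqI E' hpt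
      have hEVsum : EV q E' (fun T => ∑ b ∈ Big, if b ∈ T then (1:ℝ) else 0)
          = ∑ b ∈ Big, q b := by
        rw [EV_sum]
        refine Finset.sum_congr rfl fun b hb => ?_
        have hbE : ({b} : Finset (Fin n)) ⊆ E' :=
          Finset.singleton_subset_iff.2 ((Finset.filter_subset _ E') hb)
        have h1 : EV q E' (fun T => if b ∈ T then (1:ℝ) else 0)
            = EV q E' (fun T => if ({b} : Finset (Fin n)) ⊆ T then (1:ℝ) else 0) := by
          refine EV_congr q E' fun T _ => ?_
          congr 1
          simp [Finset.singleton_subset_iff]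
        rw [h1, EV_subset_indicator q E' _ hbE, Finset.prod_singleton]
      rw [hEVsum] at h2
      nlinarith [hBig]

end Constraint

section Survival
variable {n m : ℕ}

noncomputable def keepI (s : Fin n → Fin m → ℝ) (i : Fin n) (T : Finset (Fin n)) : ℝ :=
  if i ∈ altSet' s T then 1 else 0

lemma keep_anti (s : Fin n → Fin m → ℝ) (hs : ∀ i j, s i j ∈ Set.Icc (0:ℝ) 1)
    (i : Fin n) {A B : Finset (Fin n)} (hAB : A ⊆ B) :
    keepI s i (insert i B) ≤ keepI s i (insert i A) := by
  rw [keepI, keepI]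
  split_ifs with hB hA hA'
  · exact le_refl 1
  · exfalso
    apply hA
    rw [altSet', Finset.mem_filter] at hB ⊢
    refine ⟨Finset.mem_insert_self i A, fun j hj => ?_⟩
    have hc := hB.2 j hj
    have hsub : (insert i A).filter (fun i'' => s i j ≤ s i'' j)
        ⊆ (insert i B).filter (fun i'' => s i j ≤ s i'' j) :=
      Finset.filter_subset_filter _ (Finset.insert_subset_insert i hAB)
    have := Finset.sum_le_sum_of_subset_of_nonneg hsub (fun y _ _ => (hs y j).1)
    linarith
  · norm_num
  · norm_num

lemma survival_bound (k : ℕ) (s : Fin n → Fin m → ℝ)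
    (hs : ∀ i j, s i j ∈ Set.Icc (0:ℝ) 1)
    (hsparse : ∀ i, ((univ : Finset (Fin m)).filter (fun j => 0 < s i j)).card ≤ k)
    (x : Fin n → ℝ) (hx : ∀ i, x i ∈ Set.Icc (0:ℝ) 1)
    (hLP : ∀ j, ∑ i, s i j * x i ≤ 1)
    (hLPbig : ∀ j, ∑ i ∈ univ.filter (fun i => 1/2 < s i j), x i ≤ 1)
    (t ε : ℝ) (ht0 : 0 < t) (ht2 : t ≤ 1/2)
    (hε0 : 0 < ε) (hε1 : ε ≤ 1) (hε3 : ε^3 = 2*t) (hδ1 : t*(1+ε) ≤ 1)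
    (q : Fin n → ℝ) (hq : ∀ i, q i = t * x i) (i : Fin n) :
    (1 - t*(1+ε))^k ≤ EV q ((univ : Finset (Fin n)).erase i)
      (fun T => keepI s i (insert i T)) := by
  have hqI : ∀ i', 0 ≤ q i' ∧ q i' ≤ 1 := by
    intro i'
    rw [hq]
    constructor
    · exact mul_nonneg ht0.le (hx i').1
    · nlinarith [(hx i').1, (hx i').2]
  set E' := (univ : Finset (Fin n)).erase i with hE'
  set N := (univ : Finset (Fin m)).filter (fun j => 0 < s i j) with hN
  have h1 : EV q E' (fun T => keepI s i (insert i T))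
      = EV q E' (fun T => ∏ j ∈ N, goodInd s i j T) := by
    refine EV_congr q E' fun T hT => ?_
    have hiT : i ∉ T := fun h => (Finset.notMem_erase i univ) (hT h)
    rw [keepI]
    exact keep_eq_prod s i hiT
  have h2 := EV_harris_prod hqI E' N (fun j => goodInd s i j)
    (fun j _ A B hAB => goodInd_anti s hs i j hAB)
    (fun j _ T => goodInd_nonneg s i j T)
  have h3 : ∀ j ∈ N, 1 - t*(1+ε) ≤ EV q E' (goodInd s i j) := by
    intro j hj
    exact constraint_bound s hs x hx hLP hLPbig t ε ht0 ht2 hε0 hε1 hε3 q hq i j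
      (Finset.mem_filter.1 hj).2
  have h4 : (1 - t*(1+ε))^(N.card) ≤ ∏ j ∈ N, EV q E' (goodInd s i j) := by
    rw [← Finset.prod_const]
    exact Finset.prod_le_prod (fun j _ => by linarith) h3
  have h5 : (1 - t*(1+ε))^k ≤ (1 - t*(1+ε))^(N.card) := by
    refine pow_le_pow_of_le_one (by linarith) ?_ (hsparse i)
    nlinarith
  rw [h1]
  calc (1 - t*(1+ε))^k ≤ (1 - t*(1+ε))^(N.card) := h5
    _ ≤ ∏ j ∈ N, EV q E' (goodInd s i j) := h4
    _ ≤ EV q E' (fun T => ∏ j ∈ N, goodInd s i j T) := h2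

lemma per_element (k : ℕ) (f : Finset (Fin n) → ℝ)
    (hmono : ∀ A B : Finset (Fin n), A ⊆ B → f A ≤ f B)
    (hsub : ∀ A B : Finset (Fin n), f (A ∪ B) + f (A ∩ B) ≤ f A + f B)
    (s : Fin n → Fin m → ℝ) (hs : ∀ i j, s i j ∈ Set.Icc (0:ℝ) 1)
    (hsparse : ∀ i, ((univ : Finset (Fin m)).filter (fun j => 0 < s i j)).card ≤ k)
    (x : Fin n → ℝ) (hx : ∀ i, x i ∈ Set.Icc (0:ℝ) 1)
    (hLP : ∀ j, ∑ i, s i j * x i ≤ 1)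
    (hLPbig : ∀ j, ∑ i ∈ univ.filter (fun i => 1/2 < s i j), x i ≤ 1)
    (t ε : ℝ) (ht0 : 0 < t) (ht2 : t ≤ 1/2)
    (hε0 : 0 < ε) (hε1 : ε ≤ 1) (hε3 : ε^3 = 2*t) (hδ1 : t*(1+ε) ≤ 1)
    (q : Fin n → ℝ) (hq : ∀ i, q i = t * x i) (i : Fin n) :
    q i * ((1 - t*(1+ε))^k * EV q ((univ : Finset (Fin n)).erase i) (margf f i))
      ≤ EV q univ (fun T => keepI s i T * margf f i T) := by
  have hqI : ∀ i', 0 ≤ q i' ∧ q i' ≤ 1 := by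
    intro i'
    rw [hq]
    constructor
    · exact mul_nonneg ht0.le (hx i').1
    · nlinarith [(hx i').1, (hx i').2]
  set E' := (univ : Finset (Fin n)).erase i with hE'
  have hcond := EV_condition q (Finset.mem_univ i)
    (fun T => keepI s i T * margf f i T)
  have hzero : EV q E' (fun T => keepI s i T * margf f i T) = 0 := by
    have h1 : EV q E' (fun T => keepI s i T * margf f i T)
        = EV q E' (fun _ => (0:ℝ)) := by
      refine EV_congr q E' fun T hT => ?_
      have hiT : i ∉ T := fun h => (Finset.notMem_erase i univ) (hT h)
      have : i ∉ altSet' s T := fun h => hiT ((Finset.filter_subset _ T) h)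
      rw [keepI, if_neg this, zero_mul]
    rw [h1, EV_const]
  have hins : EV q E' (fun T => keepI s i (insert i T) * margf f i (insert i T))
      = EV q E' (fun T => keepI s i (insert i T) * margf f i T) := by
    refine EV_congr q E' fun T _ => ?_
    rw [margf_insert_self]
  have hharris := EV_harris hqI E'
    (g := fun T => keepI s i (insert i T)) (h := margf f i)
    (fun A B hAB => keep_anti s hs i hAB)
    (fun A B hAB => margf_anti hsub i hAB)
  have hsurv := survival_bound k s hs hsparse x hx hLP hLPbig t ε ht0 ht2 hε0 hε1
    hε3 hδ1 q hq i
  have hmargnn : 0 ≤ EV q E' (margf f i) :=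
    EV_nonneg hqI E' fun T _ => margf_nonneg hmono i T
  have hkey : (1 - t*(1+ε))^k * EV q E' (margf f i)
      ≤ EV q E' (fun T => keepI s i (insert i T) * margf f i T) := by
    calc (1 - t*(1+ε))^k * EV q E' (margf f i)
        ≤ EV q E' (fun T => keepI s i (insert i T)) * EV q E' (margf f i) :=
          mul_le_mul_of_nonneg_right hsurv hmargnn
      _ ≤ EV q E' (fun T => keepI s i (insert i T) * margf f i T) := hharris
  rw [hcond, hzero, hins]
  have hqi0 := (hqI i).1
  nlinarith [mul_le_mul_of_nonneg_left hkey hqi0]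

end Survival

section Final
variable {n m : ℕ}

lemma alt_feasible (s : Fin n → Fin m → ℝ) (hs : ∀ i j, s i j ∈ Set.Icc (0:ℝ) 1) :
    ∀ T : Finset (Fin n), ∀ j : Fin m, ∑ i ∈ altSet' s T, s i j ≤ 1 := by
  intro T j
  by_cases hP : ((altSet' s T).filter (fun i => 0 < s i j)).Nonempty
  · obtain ⟨i0, hi0, hmin⟩ := Finset.exists_min_image _ (fun i => s i j) hP
    have hi0S : i0 ∈ altSet' s T := (Finset.mem_filter.1 hi0).1
    have hi0pos : 0 < s i0 j := (Finset.mem_filter.1 hi0).2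
    have hcond := (Finset.mem_filter.1 hi0S).2 j hi0pos
    have hsum1 : ∑ i ∈ altSet' s T, s i j
        = ∑ i ∈ (altSet' s T).filter (fun i => 0 < s i j), s i j := by
      symm
      refine Finset.sum_subset (Finset.filter_subset _ _) ?_
      intro i hi hni
      rw [Finset.mem_filter] at hni
      push_neg at hni
      exact le_antisymm (hni hi) (hs i j).1
    have hsub2 : (altSet' s T).filter (fun i => 0 < s i j)
        ⊆ T.filter (fun i'' => s i0 j ≤ s i'' j) := by
      intro i hi
      have hi' := Finset.mem_filter.1 hi
      rw [Finset.mem_filter]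
      exact ⟨(Finset.filter_subset _ T) hi'.1, hmin i hi⟩
    calc ∑ i ∈ altSet' s T, s i j
        = ∑ i ∈ (altSet' s T).filter (fun i => 0 < s i j), s i j := hsum1
      _ ≤ ∑ i ∈ T.filter (fun i'' => s i0 j ≤ s i'' j), s i j :=
          Finset.sum_le_sum_of_subset_of_nonneg hsub2 (fun i _ _ => (hs i j).1)
      _ ≤ 1 := hcond
  · rw [Finset.not_nonempty_iff_eq_empty, Finset.filter_eq_empty_iff] at hP
    have : ∑ i ∈ altSet' s T, s i j = 0 := by
      refine Finset.sum_eq_zero fun i hi => ?_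
      have := hP hi
      push_neg at this
      exact le_antisymm this (hs i j).1
    rw [this]
    norm_num

end Final

/-- for a nonnegative monotone submodular `f` and `x` feasible for
the strengthened LP, sampling with probabilities `x i/(αk)` and altering yields
an always-feasible set `S'` with
`E[f(S')] ≥ (1/(αk))·(1 - (1/(αk))(1 + (2/(αk))^{1/3}))^k · F(x)`. -/
theorem submodular_rounding (n m k : ℕ) (f : Finset (Fin n) → ℝ)
    (hmono : ∀ A B : Finset (Fin n), A ⊆ B → f A ≤ f B)
    (hsub : ∀ A B : Finset (Fin n), f (A ∪ B) + f (A ∩ B) ≤ f A + f B)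
    (hnn : ∀ A : Finset (Fin n), 0 ≤ f A)
    (s : Fin n → Fin m → ℝ)
    (hs : ∀ i j, s i j ∈ Set.Icc (0:ℝ) 1)
    (hsparse : ∀ i, ((univ : Finset (Fin m)).filter (fun j => 0 < s i j)).card ≤ k)
    (x : Fin n → ℝ) (hx : ∀ i, x i ∈ Set.Icc (0:ℝ) 1)
    (hLP : ∀ j, ∑ i, s i j * x i ≤ 1)
    (hLPbig : ∀ j, ∑ i ∈ univ.filter (fun i => 1/2 < s i j), x i ≤ 1)
    (α : ℝ) (hα : 0 < α) (hαk : 2 ≤ α * k)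
    (q : Fin n → ℝ) (hq : ∀ i, q i = x i / (α * k)) :
    (∀ T : Finset (Fin n), ∀ j : Fin m, ∑ i ∈ altSet' s T, s i j ≤ 1) ∧
    exV q (fun T => f (altSet' s T))
      ≥ (1 / (α * k)) * (1 - (1 / (α * k)) * (1 + (2 / (α * k)) ^ ((1:ℝ)/3)))^k
          * exV x f := by
  constructor
  · exact alt_feasible s hs
  -- bridge between exV and EV
  have hbridge : ∀ (y : Fin n → ℝ) (g : Finset (Fin n) → ℝ), exV y g = EV y univ g := by
    intro y g
    rw [exV, EV, Finset.powerset_univ]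
    refine Finset.sum_congr rfl fun T _ => ?_
    rw [prodP, pOn, Finset.compl_eq_univ_sdiff]
  -- numeric setup
  have hαk0 : (0:ℝ) < α * k := by linarith
  set t : ℝ := 1 / (α * k) with htdef
  set ε : ℝ := (2 / (α * k)) ^ ((1:ℝ)/3) with hεdef
  have ht0 : 0 < t := by rw [htdef]; positivity
  have ht2 : t ≤ 1/2 := by
    rw [htdef, div_le_div_iff₀ hαk0 (by norm_num)]
    linarith
  have hbase0 : (0:ℝ) < 2 / (α * k) := by positivity
  have hbase1 : 2 / (α * k) ≤ 1 := by
    rw [div_le_one hαk0]; linarith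
  have hε0 : 0 < ε := by
    rw [hεdef]
    exact Real.rpow_pos_of_pos hbase0 _
  have hε1 : ε ≤ 1 := by
    rw [hεdef]
    exact Real.rpow_le_one hbase0.le hbase1 (by norm_num)
  have hε3 : ε^3 = 2*t := by
    have h1 : ε^(3:ℕ) = (2 / (α * k)) ^ (((1:ℝ)/3) * ((3:ℕ):ℝ)) := by
      rw [hεdef, ← Real.rpow_natCast ((2 / (α * k)) ^ ((1:ℝ)/3)) 3,
        ← Real.rpow_mul hbase0.le]
    have h2 : ((1:ℝ)/3) * ((3:ℕ):ℝ) = 1 := by norm_num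
    rw [h1, h2, Real.rpow_one, htdef]
    ring
  have hδ1 : t*(1+ε) ≤ 1 := by nlinarith
  have hq' : ∀ i, q i = t * x i := by
    intro i
    rw [hq i, htdef]
    ring
  have hqI : ∀ i', 0 ≤ q i' ∧ q i' ≤ 1 := by
    intro i'
    rw [hq']
    constructor
    · exact mul_nonneg ht0.le (hx i').1
    · nlinarith [(hx i').1, (hx i').2]
  -- step 1 : pointwise chain bound
  have hstep1 : f ∅ + ∑ i : Fin n, EV q univ (fun T => keepI s i T * margf f i T)
      ≤ EV q univ (fun T => f (altSet' s T)) := by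
    have hpt : ∀ T ⊆ (univ : Finset (Fin n)),
        f ∅ + ∑ i : Fin n, keepI s i T * margf f i T ≤ f (altSet' s T) := by
      intro T _
      have hchain := chain_bound hsub (Finset.filter_subset _ T : altSet' s T ⊆ T)
      have hrw : ∑ i : Fin n, keepI s i T * margf f i T
          = ∑ i ∈ altSet' s T, margf f i T := by
        rw [← Finset.sum_filter_add_sum_filter_not univ (fun i => i ∈ altSet' s T)]
        have h1 : ∀ i ∈ univ.filter (fun i => i ∈ altSet' s T),
            keepI s i T * margf f i T = margf f i T := by
          intro i hi
          rw [keepI, if_pos (Finset.mem_filter.1 hi).2, one_mul]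
        have h2 : ∀ i ∈ univ.filter (fun i => ¬ i ∈ altSet' s T),
            keepI s i T * margf f i T = 0 := by
          intro i hi
          rw [keepI, if_neg (Finset.mem_filter.1 hi).2, zero_mul]
        rw [Finset.sum_congr rfl h1, Finset.sum_congr rfl h2, Finset.sum_const_zero,
          add_zero]
        congr 1
        ext i
        simp [Finset.mem_filter]
      rw [hrw]
      exact hchain
    have := EV_mono hqI univ hpt
    calc f ∅ + ∑ i : Fin n, EV q univ (fun T => keepI s i T * margf f i T)
        = EV q univ (fun T => f ∅ + ∑ i : Fin n, keepI s i T * margf f i T) := by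
          rw [EV_add, EV_const, EV_sum]
      _ ≤ EV q univ (fun T => f (altSet' s T)) := this
  -- step 2 : per-element bounds and decomposition
  have hstep2 : ∀ i : Fin n,
      q i * ((1 - t*(1+ε))^k * EV q (univ.erase i) (margf f i))
        ≤ EV q univ (fun T => keepI s i T * margf f i T) :=
    fun i => per_element k f hmono hsub s hs hsparse x hx hLP hLPbig t ε ht0 ht2
      hε0 hε1 hε3 hδ1 q hq' i
  have hdecomp := EV_decomp q f
  have hmargnn : ∀ i : Fin n, 0 ≤ EV q (univ.erase i) (margf f i) :=
    fun i => EV_nonneg hqI _ fun T _ => margf_nonneg hmono i T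
  set D : ℝ := (1 - t*(1+ε))^k with hDdef
  have hD0 : 0 ≤ D := by
    rw [hDdef]
    exact pow_nonneg (by linarith) k
  have hD1 : D ≤ 1 := by
    rw [hDdef]
    refine pow_le_one₀ (by linarith) ?_
    nlinarith
  have hsum2 : D * (∑ i : Fin n, q i * EV q (univ.erase i) (margf f i))
      ≤ ∑ i : Fin n, EV q univ (fun T => keepI s i T * margf f i T) := by
    rw [Finset.mul_sum]
    refine Finset.sum_le_sum fun i _ => ?_
    have := hstep2 i
    nlinarith [this]
  -- step 3 : altogether
  have hmain : D * EV q univ f ≤ EV q univ (fun T => f (altSet' s T)) := by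
    have h1 : D * EV q univ f
        = D * f ∅ + D * ∑ i : Fin n, q i * EV q (univ.erase i) (margf f i) := by
      rw [hdecomp]; ring
    have h2 : D * f ∅ ≤ f ∅ := by nlinarith [hnn (∅ : Finset (Fin n))]
    linarith [hstep1, hsum2]
  -- thinning bound
  have hthin : t * EV x univ f ≤ EV q univ f := by
    have hqfun : q = fun i => t * x i := funext hq'
    have := EV_thin univ f hsub x (fun i => ⟨(hx i).1, (hx i).2⟩) t ht0.le
      (by linarith)
    rw [← hqfun] at this
    have h0 : 0 ≤ (1 - t) * f ∅ := mul_nonneg (by linarith) (hnn ∅)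
    linarith
  rw [ge_iff_le, hbridge q, hbridge x]
  calc 1 / (α * ↑k) * (1 - 1 / (α * ↑k) * (1 + (2 / (α * ↑k)) ^ ((1:ℝ)/3))) ^ k
        * EV x univ f
      = D * (t * EV x univ f) := by rw [hDdef, htdef, hεdef]; ring
    _ ≤ D * EV q univ f := mul_le_mul_of_nonneg_left hthin hD0
    _ ≤ EV q univ (fun T => f (altSet' s T)) := hmain
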